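/- Let x_max > 0, let p : [0, x_max] → ℝ be continuous and nonnegative, and let c : [0, x_max] → [0, x_max] be continuously differentiable with c′(x) > 0 on [0, x_max], c(0) = 0, and c(x_max) = x_max. Then ∫₀^{x_max} p(x)/(c′(x))² dx ≥ (1/x_max²) · (∫₀^{x_max} p(x)^{1/3} dx)³. In particular, Bennett's granular distortion (x_max²/(3N²))·2·∫₀^{x_max} p(x)/(c′(x))² dx is at least (2/(3N²))·(∫₀^{x_max} p(x)^{1/3} dx)³ for every admissible compressor c. -/

import Mathlib

open Real MeasureTheory intervalIntegral

theorem optimal_compressor_minimizes_bennett (xmax : ℝ) (hxmax : 0 < xmax)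
    (p : ℝ → ℝ) (hpcont : ContinuousOn p (Set.Icc 0 xmax))
    (hpnn : ∀ x ∈ Set.Icc (0:ℝ) xmax, 0 ≤ p x)
    (c c' : ℝ → ℝ)
    (hmap : Set.MapsTo c (Set.Icc 0 xmax) (Set.Icc 0 xmax))
    (hderiv : ∀ x ∈ Set.Icc (0:ℝ) xmax, HasDerivAt c (c' x) x)
    (hc'cont : ContinuousOn c' (Set.Icc 0 xmax))
    (hc'pos : ∀ x ∈ Set.Icc (0:ℝ) xmax, 0 < c' x)
    (hc0 : c 0 = 0) (hcmax : c xmax = xmax) :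
    (∫ x in (0:ℝ)..xmax, p x / (c' x) ^ 2) ≥
        (1 / xmax ^ 2) * (∫ x in (0:ℝ)..xmax, (p x) ^ ((1:ℝ)/3)) ^ 3 ∧
    ∀ N : ℕ, 0 < N →
      (xmax ^ 2 / (3 * (N:ℝ) ^ 2)) * (2 * ∫ x in (0:ℝ)..xmax, p x / (c' x) ^ 2) ≥
        (2 / (3 * (N:ℝ) ^ 2)) * (∫ x in (0:ℝ)..xmax, (p x) ^ ((1:ℝ)/3)) ^ 3 := by
  have hIcc : Set.uIcc (0:ℝ) xmax = Set.Icc 0 xmax := Set.uIcc_of_le hxmax.le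
  set μ : Measure ℝ := volume.restrict (Set.Ioc (0:ℝ) xmax) with hμ
  haveI : IsFiniteMeasure μ := ⟨by
    rw [hμ, Measure.restrict_apply_univ, Real.volume_Ioc]
    exact ENNReal.ofReal_lt_top⟩
  have hsub : Set.Ioc (0:ℝ) xmax ⊆ Set.Icc 0 xmax := Set.Ioc_subset_Icc_self
  set f : ℝ → ℝ := fun x => (p x / (c' x) ^ 2) ^ ((1:ℝ)/3) with hf
  set g : ℝ → ℝ := fun x => (c' x) ^ ((2:ℝ)/3) with hg
  -- continuity of f and g on Icc
  have hc'ne : ∀ x ∈ Set.Icc (0:ℝ) xmax, c' x ≠ 0 := fun x hx => (hc'pos x hx).ne'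
  have hfc : ContinuousOn f (Set.Icc 0 xmax) := by
    apply ContinuousOn.rpow_const
    · exact hpcont.div (hc'cont.pow 2) (fun x hx => pow_ne_zero 2 (hc'ne x hx))
    · intro x hx; right; norm_num
  have hgc : ContinuousOn g (Set.Icc 0 xmax) := by
    apply ContinuousOn.rpow_const hc'cont
    intro x hx; right; norm_num
  -- ae measurability and Memℒp
  have hmeasIoc : MeasurableSet (Set.Ioc (0:ℝ) xmax) := measurableSet_Ioc
  have memf : MemLp f (ENNReal.ofReal 3) μ := by
    obtain ⟨M, hM⟩ := (isCompact_Icc).exists_bound_of_continuousOn hfc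
    have hfm : AEStronglyMeasurable f μ :=
      (hfc.mono hsub).aestronglyMeasurable hmeasIoc
    exact (memLp_top_of_bound hfm M
      ((ae_restrict_iff' hmeasIoc).2 (.of_forall fun x hx => hM x (hsub hx)))).mono_exponent
      le_top
  have memg : MemLp g (ENNReal.ofReal (3/2)) μ := by
    obtain ⟨M, hM⟩ := (isCompact_Icc).exists_bound_of_continuousOn hgc
    have hgm : AEStronglyMeasurable g μ :=
      (hgc.mono hsub).aestronglyMeasurable hmeasIoc
    exact (memLp_top_of_bound hgm M
      ((ae_restrict_iff' hmeasIoc).2 (.of_forall fun x hx => hM x (hsub hx)))).mono_exponent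
      le_top
  have hconj : (3:ℝ).HolderConjugate (3/2) := (Real.holderConjugate_iff_eq_conjExponent (by norm_num)).2 (by norm_num)
  have hfnn : 0 ≤ᵐ[μ] f := (ae_restrict_iff' hmeasIoc).2 <| .of_forall fun x hx => by
    have := hpnn x (hsub hx); have := hc'pos x (hsub hx)
    exact Real.rpow_nonneg (by positivity) _
  have hgnn : 0 ≤ᵐ[μ] g := (ae_restrict_iff' hmeasIoc).2 <| .of_forall fun x hx =>
    Real.rpow_nonneg (hc'pos x (hsub hx)).le _
  have hholder := MeasureTheory.integral_mul_le_Lp_mul_Lq_of_nonneg hconj hfnn hgnn memf memg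
  -- rewrite the three integrals
  have hfg : ∫ x, f x * g x ∂μ = ∫ x, (p x) ^ ((1:ℝ)/3) ∂μ := by
    apply MeasureTheory.integral_congr_ae
    refine (ae_restrict_iff' hmeasIoc).2 (.of_forall fun x hx => ?_)
    have hx' := hsub hx
    have hpx := hpnn x hx'
    have hc'x := hc'pos x hx'
    have h2 : (0:ℝ) ≤ (c' x) ^ 2 := sq_nonneg _
    rw [hf, hg]
    simp only
    rw [Real.div_rpow hpx h2, ← Real.rpow_natCast (c' x) 2, ← Real.rpow_mul hc'x.le]
    rw [div_mul_eq_mul_div, mul_comm, mul_div_assoc]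
    norm_num
    rw [mul_comm, div_mul_cancel₀ _ (by positivity : (c' x) ^ ((2:ℝ)/3) ≠ 0)]
  have hf3 : ∫ x, f x ^ (3:ℝ) ∂μ = ∫ x, p x / (c' x) ^ 2 ∂μ := by
    apply MeasureTheory.integral_congr_ae
    refine (ae_restrict_iff' hmeasIoc).2 (.of_forall fun x hx => ?_)
    have hx' := hsub hx
    have : (0:ℝ) ≤ p x / (c' x) ^ 2 := by
      have := hpnn x hx'; have := hc'pos x hx'; positivity
    rw [hf]; simp only
    rw [← Real.rpow_mul this]
    norm_num
  have hg32 : ∫ x, g x ^ ((3:ℝ)/2) ∂μ = xmax := by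
    have h1 : ∫ x, g x ^ ((3:ℝ)/2) ∂μ = ∫ x, c' x ∂μ := by
      apply MeasureTheory.integral_congr_ae
      refine (ae_restrict_iff' hmeasIoc).2 (.of_forall fun x hx => ?_)
      have hc'x := hc'pos x (hsub hx)
      rw [hg]; simp only
      rw [← Real.rpow_mul hc'x.le]
      norm_num
    have h2 : ∫ x in (0:ℝ)..xmax, c' x = xmax := by
      rw [intervalIntegral.integral_eq_sub_of_hasDerivAt
        (fun x hx => hderiv x (hIcc ▸ hx))
        ((hc'cont.mono (by rw [hIcc])).intervalIntegrable), hcmax, hc0, sub_zero]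
    rw [h1, ← intervalIntegral.integral_of_le hxmax.le, h2]
  rw [hfg, hf3, hg32] at hholder
  -- convert interval integrals
  have eqI : (∫ x in (0:ℝ)..xmax, p x / (c' x) ^ 2) = ∫ x, p x / (c' x) ^ 2 ∂μ :=
    intervalIntegral.integral_of_le hxmax.le
  have eqJ : (∫ x in (0:ℝ)..xmax, (p x) ^ ((1:ℝ)/3)) = ∫ x, (p x) ^ ((1:ℝ)/3) ∂μ :=
    intervalIntegral.integral_of_le hxmax.le
  set I : ℝ := ∫ x, p x / (c' x) ^ 2 ∂μ with hI
  set J : ℝ := ∫ x, (p x) ^ ((1:ℝ)/3) ∂μ with hJ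
  have hInn : 0 ≤ I := by
    apply MeasureTheory.integral_nonneg_of_ae
    refine (ae_restrict_iff' hmeasIoc).2 (.of_forall fun x hx => ?_)
    have := hpnn x (hsub hx); have := hc'pos x (hsub hx); positivity
  have hJnn : 0 ≤ J := by
    apply MeasureTheory.integral_nonneg_of_ae
    refine (ae_restrict_iff' hmeasIoc).2 (.of_forall fun x hx => ?_)
    exact Real.rpow_nonneg (hpnn x (hsub hx)) _
  -- cube Hölder
  have hcube : J ^ 3 ≤ I * xmax ^ 2 := by
    have hR : 0 ≤ I ^ ((1:ℝ)/3) * xmax ^ ((1:ℝ)/(3/2)) := by positivity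
    have := pow_le_pow_left₀ hJnn hholder 3
    calc J ^ 3 ≤ (I ^ ((1:ℝ)/3) * xmax ^ ((1:ℝ)/(3/2))) ^ 3 := this
    _ = (I ^ ((1:ℝ)/3)) ^ (3:ℕ) * (xmax ^ ((2:ℝ)/3)) ^ (3:ℕ) := by
        rw [mul_pow]; norm_num
    _ = I * xmax ^ 2 := by
        rw [← Real.rpow_natCast (I ^ ((1:ℝ)/3)), ← Real.rpow_natCast (xmax ^ ((2:ℝ)/3)),
          ← Real.rpow_mul hInn, ← Real.rpow_mul hxmax.le]
        norm_num
  constructor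
  · rw [eqI, eqJ, ge_iff_le, one_div, inv_mul_le_iff₀ (by positivity)]
    nlinarith
  · intro N hN
    rw [eqI, eqJ, ge_iff_le]
    have hN2 : (0:ℝ) < 3 * (N:ℝ) ^ 2 := by positivity
    rw [div_mul_eq_mul_div, div_mul_eq_mul_div, div_le_div_iff₀ hN2 hN2]
    nlinarith
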